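/- Let A be the 3-dimensional commutative ℂ-algebra with basis e₁, e₂, e₃ and nonzero products e₁e₁ = e₂ and e₁e₂ = e₂e₁ = e₃ (all other products of basis vectors are zero). Then a symmetric bilinear form θ : A × A → ℂ belongs to B²(A, ℂ) if and only if θ(e₁, e₃) = θ(e₂, e₂) = θ(e₂, e₃) = θ(e₃, e₃) = 0. Consequently the quotient H²(A, ℂ) = Z²(A, ℂ)/B²(A, ℂ) has dimension 4, with basis the classes [Δ₁₃], [Δ₂₂], [Δ₂₃], [Δ₃₃]. -/

import Mathlib

noncomputable section

open scoped Matrix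

/-- The multiplication of the 3-dimensional commutative algebra with
`e₁e₁ = e₂`, `e₁e₂ = e₂e₁ = e₃` (all other products of basis vectors zero),
on the carrier `Fin 3 → ℂ`. -/
def mulA (u v : Fin 3 → ℂ) : Fin 3 → ℂ :=
  ![0, u 0 * v 0, u 0 * v 1 + u 1 * v 0]

/-- `Z²(A, ℂ)`, the space of symmetric bilinear forms on `A`, realized as the space of
symmetric `3 × 3` matrices (the Gram matrix of a form; the form attached to a matrix `M`
is `(u, v) ↦ u ⬝ᵥ M *ᵥ v`). -/
def Z2 : Submodule ℂ (Matrix (Fin 3) (Fin 3) ℂ) where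
  carrier := {M | ∀ i j, M i j = M j i}
  add_mem' := by
    intro a b ha hb i j
    simp [Matrix.add_apply, ha i j, hb i j]
  zero_mem' := by intro i j; simp
  smul_mem' := by
    intro c M hM i j
    simp [Matrix.smul_apply, hM i j]

/-- `B²(A, ℂ)`: the matrices whose associated bilinear form is a coboundary
`δf(u, v) = f (uv)` for a linear functional `f`. -/
def B2 : Submodule ℂ (Matrix (Fin 3) (Fin 3) ℂ) where
  carrier :=
    {M | ∃ f : (Fin 3 → ℂ) →ₗ[ℂ] ℂ, ∀ u v : Fin 3 → ℂ, u ⬝ᵥ M.mulVec v = f (mulA u v)}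
  add_mem' := by
    rintro a b ⟨f, hf⟩ ⟨g, hg⟩
    refine ⟨f + g, fun u v => ?_⟩
    simp [Matrix.add_mulVec, dotProduct_add, hf u v, hg u v]
  zero_mem' := ⟨0, fun u v => by simp [Matrix.zero_mulVec]⟩
  smul_mem' := by
    rintro c M ⟨f, hf⟩
    refine ⟨c • f, fun u v => ?_⟩
    simp [Matrix.smul_mulVec, dotProduct_smul, hf u v]

/-- `B²(A, ℂ)` viewed inside `Z²(A, ℂ)`. -/
def B2' : Submodule ℂ Z2 := B2.comap Z2.subtype

/-- `H²(A, ℂ) = Z²(A, ℂ) / B²(A, ℂ)`. -/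
abbrev H2 := Z2 ⧸ B2'

/-- The symmetric bilinear form `Δ₁₃` (as a symmetric matrix). -/
def D13 : Z2 :=
  ⟨!![0,0,1; 0,0,0; 1,0,0], by intro i j; fin_cases i <;> fin_cases j <;> rfl⟩

/-- The symmetric bilinear form `Δ₂₂` (as a symmetric matrix). -/
def D22 : Z2 :=
  ⟨!![0,0,0; 0,1,0; 0,0,0], by intro i j; fin_cases i <;> fin_cases j <;> rfl⟩

/-- The symmetric bilinear form `Δ₂₃` (as a symmetric matrix). -/
def D23 : Z2 :=
  ⟨!![0,0,0; 0,0,1; 0,1,0], by intro i j; fin_cases i <;> fin_cases j <;> rfl⟩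

/-- The symmetric bilinear form `Δ₃₃` (as a symmetric matrix). -/
def D33 : Z2 :=
  ⟨!![0,0,0; 0,0,0; 0,0,1], by intro i j; fin_cases i <;> fin_cases j <;> rfl⟩

/-- The classes `[Δ₁₃], [Δ₂₂], [Δ₂₃], [Δ₃₃]` in `H²(A, ℂ)`. -/
def fam : Fin 4 → H2 :=
  ![Submodule.Quotient.mk D13, Submodule.Quotient.mk D22,
    Submodule.Quotient.mk D23, Submodule.Quotient.mk D33]

/-- For the algebra `e₁e₁ = e₂, e₁e₂ = e₃`: a symmetric bilinear form `θ` belongs to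
`B²(A, ℂ)` iff `θ(e₁,e₃) = θ(e₂,e₂) = θ(e₂,e₃) = θ(e₃,e₃) = 0`; consequently
`H²(A, ℂ) = Z²(A, ℂ)/B²(A, ℂ)` has dimension `4`, with basis the classes
`[Δ₁₃], [Δ₂₂], [Δ₂₃], [Δ₃₃]`. -/
lemma expand3 (u : Fin 3 → ℂ) :
    u = u 0 • ![1,0,0] + u 1 • ![0,1,0] + u 2 • ![0,0,1] := by
  funext i; fin_cases i <;> simp

lemma mulA_zero1 : mulA ![1,0,0] ![0,0,1] = 0 := by
  funext i; fin_cases i <;> simp [mulA]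
lemma mulA_zero2 : mulA ![0,1,0] ![0,1,0] = 0 := by
  funext i; fin_cases i <;> simp [mulA]
lemma mulA_zero3 : mulA ![0,1,0] ![0,0,1] = 0 := by
  funext i; fin_cases i <;> simp [mulA]
lemma mulA_zero4 : mulA ![0,0,1] ![0,0,1] = 0 := by
  funext i; fin_cases i <;> simp [mulA]

/-- the functional built from two scalars -/
def ff (a b : ℂ) : (Fin 3 → ℂ) →ₗ[ℂ] ℂ :=
  a • LinearMap.proj 1 + b • LinearMap.proj 2

lemma ff_apply (a b : ℂ) (w : Fin 3 → ℂ) : ff a b w = a * w 1 + b * w 2 := by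
  simp [ff]

lemma ff_mulA (a b : ℂ) (u v : Fin 3 → ℂ) :
    ff a b (mulA u v) = a * (u 0 * v 0) + b * (u 0 * v 1 + u 1 * v 0) := by
  simp [ff_apply, mulA]

lemma theta_iff (θ : (Fin 3 → ℂ) →ₗ[ℂ] (Fin 3 → ℂ) →ₗ[ℂ] ℂ) (hsym : ∀ u v, θ u v = θ v u) :
    (∃ f : (Fin 3 → ℂ) →ₗ[ℂ] ℂ, ∀ u v, θ u v = f (mulA u v)) ↔
      (θ ![1,0,0] ![0,0,1] = 0 ∧ θ ![0,1,0] ![0,1,0] = 0 ∧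
       θ ![0,1,0] ![0,0,1] = 0 ∧ θ ![0,0,1] ![0,0,1] = 0) := by
  constructor
  · rintro ⟨f, hf⟩
    refine ⟨?_, ?_, ?_, ?_⟩ <;>
      simp [hf, mulA_zero1, mulA_zero2, mulA_zero3, mulA_zero4]
  · rintro ⟨h13, h22, h23, h33⟩
    refine ⟨ff (θ ![1,0,0] ![1,0,0]) (θ ![1,0,0] ![0,1,0]), fun u v => ?_⟩
    have h31 : θ ![0,0,1] ![1,0,0] = 0 := by rw [hsym]; exact h13
    have h32 : θ ![0,0,1] ![0,1,0] = 0 := by rw [hsym]; exact h23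
    have h21 : θ ![0,1,0] ![1,0,0] = θ ![1,0,0] ![0,1,0] := hsym _ _
    rw [ff_mulA]
    conv_lhs => rw [expand3 u, expand3 v]
    simp only [map_add, map_smul, LinearMap.add_apply, LinearMap.smul_apply, smul_eq_mul,
      h13, h22, h23, h33, h31, h32, h21]
    ring
def phi : Z2 →ₗ[ℂ] (Fin 4 → ℂ) where
  toFun M := ![M.1 0 2, M.1 1 1, M.1 1 2, M.1 2 2]
  map_add' a b := by
    funext i; fin_cases i <;> simp [Matrix.add_apply]
  map_smul' c a := by
    funext i; fin_cases i <;> simp [Matrix.smul_apply]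

lemma mem_B2_iff (M : Matrix (Fin 3) (Fin 3) ℂ) (hsym : ∀ i j, M i j = M j i) :
    M ∈ B2 ↔ (M 0 2 = 0 ∧ M 1 1 = 0 ∧ M 1 2 = 0 ∧ M 2 2 = 0) := by
  have key : ∀ (i j : Fin 3) (u v : Fin 3 → ℂ),
      (∀ k, u k = if k = i then 1 else 0) → (∀ k, v k = if k = j then 1 else 0) →
      u ⬝ᵥ M.mulVec v = M i j := by
    intro i j u v hu hv
    fin_cases i <;> fin_cases j <;>
      simp [dotProduct, Matrix.mulVec, Fin.sum_univ_three, hu, hv]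
  constructor
  · rintro ⟨f, hf⟩
    have e1 : ∀ k : Fin 3, (![1,0,0] : Fin 3 → ℂ) k = if k = 0 then 1 else 0 := by intro k; fin_cases k <;> simp
    have e2 : ∀ k : Fin 3, (![0,1,0] : Fin 3 → ℂ) k = if k = 1 then 1 else 0 := by intro k; fin_cases k <;> simp
    have e3 : ∀ k : Fin 3, (![0,0,1] : Fin 3 → ℂ) k = if k = 2 then 1 else 0 := by intro k; fin_cases k <;> simp
    refine ⟨?_, ?_, ?_, ?_⟩
    · rw [← key 0 2 _ _ e1 e3, hf, mulA_zero1, map_zero]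
    · rw [← key 1 1 _ _ e2 e2, hf, mulA_zero2, map_zero]
    · rw [← key 1 2 _ _ e2 e3, hf, mulA_zero3, map_zero]
    · rw [← key 2 2 _ _ e3 e3, hf, mulA_zero4, map_zero]
  · rintro ⟨h02, h11, h12, h22⟩
    refine ⟨ff (M 0 0) (M 0 1), fun u v => ?_⟩
    have h20 : M 2 0 = 0 := (hsym 2 0).trans h02
    have h21 : M 2 1 = 0 := (hsym 2 1).trans h12
    have h10 : M 1 0 = M 0 1 := hsym 1 0
    rw [ff_mulA]
    simp [dotProduct, Matrix.mulVec, Fin.sum_univ_three, h02, h11, h12, h22, h20, h21, h10]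
    ring

lemma ker_phi : LinearMap.ker phi = B2' := by
  ext M
  have hsym := M.2
  have : M.1 ∈ B2 ↔ _ := mem_B2_iff M.1 hsym
  simp only [LinearMap.mem_ker, B2', Submodule.mem_comap, Submodule.subtype_apply]
  rw [this]
  constructor
  · intro h
    refine ⟨congrFun h 0, congrFun h 1, congrFun h 2, congrFun h 3⟩
  · rintro ⟨h0, h1, h2, h3⟩
    funext i; fin_cases i <;> simpa [phi]

lemma phi_surj : Function.Surjective phi := by
  intro w
  refine ⟨w 0 • D13 + w 1 • D22 + w 2 • D23 + w 3 • D33, ?_⟩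
  funext i
  fin_cases i <;> simp [phi, D13, D22, D23, D33, Matrix.add_apply, Matrix.smul_apply]

def eqv : H2 ≃ₗ[ℂ] (Fin 4 → ℂ) :=
  (Submodule.quotEquivOfEq B2' (LinearMap.ker phi) ker_phi.symm).trans
    (phi.quotKerEquivOfSurjective phi_surj)

lemma eqv_mk (M : Z2) : eqv (Submodule.Quotient.mk M) = phi M := by
  rfl
lemma eqv_fam : ⇑eqv ∘ fam = ⇑(Pi.basisFun ℂ (Fin 4)) := by
  funext i
  fin_cases i <;>
  · show eqv (Submodule.Quotient.mk _) = _
    rw [eqv_mk]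
    funext j
    fin_cases j <;> simp [phi, D13, D22, D23, D33, Pi.basisFun_apply, Pi.single_apply, Matrix.vecHead, Matrix.vecTail]

theorem stmt11 :
    (∀ θ : (Fin 3 → ℂ) →ₗ[ℂ] (Fin 3 → ℂ) →ₗ[ℂ] ℂ, (∀ u v, θ u v = θ v u) →
      ((∃ f : (Fin 3 → ℂ) →ₗ[ℂ] ℂ, ∀ u v, θ u v = f (mulA u v)) ↔
        (θ ![1,0,0] ![0,0,1] = 0 ∧ θ ![0,1,0] ![0,1,0] = 0 ∧
         θ ![0,1,0] ![0,0,1] = 0 ∧ θ ![0,0,1] ![0,0,1] = 0))) ∧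
    Module.finrank ℂ H2 = 4 ∧
    LinearIndependent ℂ fam ∧
    Submodule.span ℂ (Set.range fam) = ⊤ := by
  refine ⟨theta_iff, ?_, ?_, ?_⟩
  · rw [eqv.finrank_eq]
    simp
  · apply LinearIndependent.of_comp eqv.toLinearMap
    have : ⇑eqv.toLinearMap ∘ fam = ⇑(Pi.basisFun ℂ (Fin 4)) := eqv_fam
    rw [this]
    exact (Pi.basisFun ℂ (Fin 4)).linearIndependent
  · apply Submodule.map_injective_of_injective (f := eqv.toLinearMap) eqv.injective
    rw [Submodule.map_span, Submodule.map_top, ← Set.range_comp]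
    rw [show LinearMap.range eqv.toLinearMap = ⊤ from LinearMap.range_eq_top.2 eqv.surjective]
    have : ⇑eqv.toLinearMap ∘ fam = ⇑(Pi.basisFun ℂ (Fin 4)) := eqv_fam
    rw [this, Module.Basis.span_eq]
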